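/- G = P·ι(H) ⊔ P·s₂·ι(H): every g ∈ GSp(4,k) lies in P·ι(H) or in P·s₂·ι(H), and these two sets are disjoint (second part of Lemma 2.3, the double coset decomposition G = PH ⊔ P s₂ H). -/

import Mathlib

open Matrix

/-- The standard symplectic matrix `J = ((0,E₂),(−E₂,0))` of `GSp(4)`. -/
def J4 (k : Type*) [Field k] : Matrix (Fin 4) (Fin 4) k :=
  !![0, 0, 1, 0; 0, 0, 0, 1; -1, 0, 0, 0; 0, -1, 0, 0]

/-- Membership in `G = GSp(4,k)`. -/
def IsGSp {k : Type*} [Field k] (g : Matrix (Fin 4) (Fin 4) k) : Prop :=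
  IsUnit g.det ∧ ∃ lam : k, lam ≠ 0 ∧ gᵀ * J4 k * g = lam • J4 k

/-- `L₀ = span_k(e₁,e₂) ⊆ k⁴`. -/
def L0 (k : Type*) [Field k] : Submodule k (Fin 4 → k) :=
  Submodule.span k {![1, 0, 0, 0], ![0, 1, 0, 0]}

/-- The Siegel parabolic `P = {g ∈ G : g·L₀ = L₀}`. -/
def Pset (k : Type*) [Field k] : Set (Matrix (Fin 4) (Fin 4) k) :=
  {g | IsGSp g ∧ Submodule.map g.mulVecLin (L0 k) = L0 k}

/-- The Weyl group element `s₂`. -/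
def s2mat (k : Type*) [Field k] : Matrix (Fin 4) (Fin 4) k :=
  !![1, 0, 0, 0; 0, 0, 0, 1; 0, 0, 1, 0; 0, -1, 0, 0]

/-- The embedding `ι : H → GL(4,k)`. -/
def iota {k K : Type*} [Field k] [Field K] (α : k) (c1 c2 : K → k)
    (m : Matrix (Fin 2) (Fin 2) K) : Matrix (Fin 4) (Fin 4) k :=
  !![c1 (m 0 0), c2 (m 0 0) * α, c1 (m 0 1), c2 (m 0 1);
     c2 (m 0 0), c1 (m 0 0), c2 (m 0 1), c1 (m 0 1) / α;
     c1 (m 1 0), c2 (m 1 0) * α, c1 (m 1 1), c2 (m 1 1);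
     c2 (m 1 0) * α, c1 (m 1 0) * α, c2 (m 1 1) * α, c1 (m 1 1)]

/-- Membership in `H = {g ∈ GL(2,K) : det g ∈ kˣ}`. -/
def InH {k K : Type*} [Field k] [Field K] [Algebra k K]
    (m : Matrix (Fin 2) (Fin 2) K) : Prop :=
  ∃ d : k, d ≠ 0 ∧ m.det = algebraMap k K d

namespace GSpAux

variable {k K : Type*} [Field k] [Field K] [Algebra k K]

noncomputable def phi4 (r : K) (v : Fin 4 → k) : Fin 2 → K :=
  ![algebraMap k K (v 0) + algebraMap k K (v 1) * r,
    algebraMap k K (v 2) + algebraMap k K (v 3) / r]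

def dK (x y : Fin 2 → K) : K := x 0 * y 1 - x 1 * y 0

def Bf (v w : Fin 4 → k) : k := v 0 * w 2 + v 1 * w 3 - v 2 * w 0 - v 3 * w 1

def Tf (α : k) (v w : Fin 4 → k) : k :=
  v 1 * w 2 + v 0 * w 3 / α - v 3 * w 0 / α - v 2 * w 1

variable {α : k} {r : K} {c1 c2 : K → k}

lemma uniq_repr
    (hindep : ∀ y1 y2 : k, algebraMap k K y1 + algebraMap k K y2 * r = 0 → y1 = 0 ∧ y2 = 0)
    {s t s' t' : k}
    (h : algebraMap k K s + algebraMap k K t * r = algebraMap k K s' + algebraMap k K t' * r) :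
    s = s' ∧ t = t' := by
  have h2 := hindep (s - s') (t - t') (by simp only [map_sub]; linear_combination h)
  exact ⟨sub_eq_zero.mp h2.1, sub_eq_zero.mp h2.2⟩

lemma phi4_inj (hr0 : r ≠ 0)
    (hindep : ∀ y1 y2 : k, algebraMap k K y1 + algebraMap k K y2 * r = 0 → y1 = 0 ∧ y2 = 0)
    {v w : Fin 4 → k} (h : phi4 r v = phi4 r w) : v = w := by
  have h0 := congrFun h 0
  have h1 := congrFun h 1
  simp only [phi4, Matrix.cons_val_zero, Matrix.cons_val_one, Matrix.head_cons] at h0 h1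
  obtain ⟨e0, e1⟩ := uniq_repr hindep h0
  have h1' : algebraMap k K (v 3) + algebraMap k K (v 2) * r
      = algebraMap k K (w 3) + algebraMap k K (w 2) * r := by
    field_simp at h1
    linear_combination h1
  obtain ⟨e3, e2⟩ := uniq_repr hindep h1'
  funext i
  fin_cases i
  · exact e0
  · exact e1
  · exact e2
  · exact e3

lemma phi4_zero : phi4 r (0 : Fin 4 → k) = 0 := by
  funext i; fin_cases i <;> simp [phi4]


lemma phi4_iota (hα : α ≠ 0) (hr : r * r = algebraMap k K α) (hr0 : r ≠ 0)
    (hrepr : ∀ x : K, x = algebraMap k K (c1 x) + algebraMap k K (c2 x) * r)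
    (m : Matrix (Fin 2) (Fin 2) K) (v : Fin 4 → k) :
    phi4 r (iota α c1 c2 m *ᵥ v) = m *ᵥ phi4 r v := by
  have key : ∀ i : Fin 2, phi4 r (iota α c1 c2 m *ᵥ v) i = (m *ᵥ phi4 r v) i := by
    intro i
    fin_cases i <;>
    · simp only [phi4, iota, Matrix.mulVec, dotProduct, Fin.sum_univ_four,
        Fin.sum_univ_two]
      simp
      set A1 := c1 (m 0 0) with hA1
      set A2 := c2 (m 0 0) with hA2
      set B1 := c1 (m 0 1) with hB1
      set B2 := c2 (m 0 1) with hB2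
      set C1 := c1 (m 1 0) with hC1
      set C2 := c2 (m 1 0) with hC2
      set D1 := c1 (m 1 1) with hD1
      set D2 := c2 (m 1 1) with hD2
      simp only [show m 0 0 = algebraMap k K A1 + algebraMap k K A2 * r from hrepr _,
          show m 0 1 = algebraMap k K B1 + algebraMap k K B2 * r from hrepr _,
          show m 1 0 = algebraMap k K C1 + algebraMap k K C2 * r from hrepr _,
          show m 1 1 = algebraMap k K D1 + algebraMap k K D2 * r from hrepr _]
      rw [show algebraMap k K α = r * r from hr.symm]
      field_simp
      ring
  funext i
  exact key i
lemma dK_mulVec (h : Matrix (Fin 2) (Fin 2) K) (x y : Fin 2 → K) :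
    dK (h *ᵥ x) (h *ᵥ y) = h.det * dK x y := by
  simp [dK, Matrix.mulVec, dotProduct, Fin.sum_univ_two, Matrix.det_fin_two]
  ring

lemma dK_phi4 (hα : α ≠ 0) (hr : r * r = algebraMap k K α) (hr0 : r ≠ 0) (v w : Fin 4 → k) :
    dK (phi4 r v) (phi4 r w)
      = algebraMap k K (Bf v w) + algebraMap k K (Tf α v w) * r := by
  simp only [dK, phi4, Bf, Tf, Matrix.cons_val_zero, Matrix.cons_val_one, Matrix.head_cons,
    map_add, map_sub, _root_.map_mul, map_div₀]
  rw [show algebraMap k K α = r * r from hr.symm]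
  field_simp
  ring

lemma Bf_dot (v w : Fin 4 → k) : v ⬝ᵥ (J4 k *ᵥ w) = Bf v w := by
  simp [J4, Bf, Matrix.mulVec, dotProduct, Fin.sum_univ_four, Matrix.vecHead, Matrix.vecTail]
  ring

lemma dot_conj (A M : Matrix (Fin 4) (Fin 4) k) (v w : Fin 4 → k) :
    (A *ᵥ v) ⬝ᵥ (M *ᵥ (A *ᵥ w)) = v ⬝ᵥ ((Aᵀ * M * A) *ᵥ w) := by
  rw [Matrix.dotProduct_mulVec, ← Matrix.vecMul_transpose, Matrix.vecMul_vecMul,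
    ← Matrix.dotProduct_mulVec, Matrix.mulVec_mulVec, Matrix.mul_assoc]

lemma eq_of_dot {M N : Matrix (Fin 4) (Fin 4) k}
    (h : ∀ v w, v ⬝ᵥ (M *ᵥ w) = v ⬝ᵥ (N *ᵥ w)) : M = N := by
  ext i j
  have := h (Pi.single i 1) (Pi.single j 1)
  simpa [Matrix.mulVec_single, single_dotProduct] using this

lemma IsGSp_mul {g₁ g₂ : Matrix (Fin 4) (Fin 4) k} (h₁ : IsGSp g₁) (h₂ : IsGSp g₂) :
    IsGSp (g₁ * g₂) := by
  obtain ⟨u1, l1, hl1, e1⟩ := h₁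
  obtain ⟨u2, l2, hl2, e2⟩ := h₂
  refine ⟨by rw [Matrix.det_mul]; exact u1.mul u2, l1 * l2, mul_ne_zero hl1 hl2, ?_⟩
  rw [Matrix.transpose_mul]
  calc g₂ᵀ * g₁ᵀ * J4 k * (g₁ * g₂) = g₂ᵀ * (g₁ᵀ * J4 k * g₁) * g₂ := by
        simp only [Matrix.mul_assoc]
    _ = g₂ᵀ * (l1 • J4 k) * g₂ := by rw [e1]
    _ = l1 • (g₂ᵀ * J4 k * g₂) := by
        rw [Matrix.mul_smul, Matrix.smul_mul]
    _ = l1 • (l2 • J4 k) := by rw [e2]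
    _ = (l1 * l2) • J4 k := by rw [smul_smul]

lemma IsGSp_inv {g : Matrix (Fin 4) (Fin 4) k} (h : IsGSp g) : IsGSp g⁻¹ := by
  obtain ⟨u, l, hl, e⟩ := h
  refine ⟨(Matrix.isUnit_nonsing_inv_det g u), l⁻¹, inv_ne_zero hl, ?_⟩
  have h1 : (g⁻¹)ᵀ * (gᵀ * J4 k * g) * g⁻¹ = (g⁻¹)ᵀ * (l • J4 k) * g⁻¹ := by rw [e]
  have h2 : (g⁻¹)ᵀ * (gᵀ * J4 k * g) * g⁻¹ = J4 k := by
    calc (g⁻¹)ᵀ * (gᵀ * J4 k * g) * g⁻¹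
        = ((g⁻¹)ᵀ * gᵀ) * J4 k * (g * g⁻¹) := by simp only [Matrix.mul_assoc]
      _ = (g * g⁻¹)ᵀ * J4 k * (g * g⁻¹) := by rw [Matrix.transpose_mul]
      _ = J4 k := by rw [Matrix.mul_nonsing_inv g u]; simp
  have h3 : J4 k = l • ((g⁻¹)ᵀ * J4 k * g⁻¹) := by
    conv_lhs => rw [← h2]
    rw [h1, Matrix.mul_smul, Matrix.smul_mul]
  calc (g⁻¹)ᵀ * J4 k * g⁻¹ = (l⁻¹ * l) • ((g⁻¹)ᵀ * J4 k * g⁻¹) := by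
        rw [inv_mul_cancel₀ hl, one_smul]
    _ = l⁻¹ • J4 k := by rw [← smul_smul, ← h3]

lemma iota_det_isUnit (hα : α ≠ 0) (hr : r * r = algebraMap k K α) (hr0 : r ≠ 0)
    (hrepr : ∀ x : K, x = algebraMap k K (c1 x) + algebraMap k K (c2 x) * r)
    (hindep : ∀ y1 y2 : k, algebraMap k K y1 + algebraMap k K y2 * r = 0 → y1 = 0 ∧ y2 = 0)
    {h : Matrix (Fin 2) (Fin 2) K} (hdet : h.det ≠ 0) :
    IsUnit (iota α c1 c2 h).det := by
  rw [isUnit_iff_ne_zero]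
  intro h0
  obtain ⟨v, hv0, hv⟩ := Matrix.exists_mulVec_eq_zero_iff.mpr h0
  have hp : h *ᵥ phi4 r v = 0 := by
    have := phi4_iota (c1 := c1) (c2 := c2) hα hr hr0 hrepr h v
    rw [hv, phi4_zero] at this
    exact this.symm
  have hpv : phi4 r v ≠ 0 := by
    intro hz
    exact hv0 (phi4_inj hr0 hindep (by rw [hz, phi4_zero]))
  exact hdet (Matrix.exists_mulVec_eq_zero_iff.mp ⟨phi4 r v, hpv, hp⟩)

lemma IsGSp_iota (hα : α ≠ 0) (hr : r * r = algebraMap k K α) (hr0 : r ≠ 0)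
    (hrepr : ∀ x : K, x = algebraMap k K (c1 x) + algebraMap k K (c2 x) * r)
    (hindep : ∀ y1 y2 : k, algebraMap k K y1 + algebraMap k K y2 * r = 0 → y1 = 0 ∧ y2 = 0)
    {h : Matrix (Fin 2) (Fin 2) K} (hh : InH (k := k) h) :
    IsGSp (iota α c1 c2 h) := by
  obtain ⟨d, hd, hdet⟩ := hh
  have hdK : h.det ≠ 0 := by
    rw [hdet]; exact (map_ne_zero _).mpr hd
  refine ⟨iota_det_isUnit hα hr hr0 hrepr hindep hdK, d, hd, ?_⟩
  have key : ∀ v w : Fin 4 → k,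
      (iota α c1 c2 h *ᵥ v) ⬝ᵥ (J4 k *ᵥ (iota α c1 c2 h *ᵥ w)) = d * (v ⬝ᵥ (J4 k *ᵥ w)) := by
    intro v w
    have e1 : dK (phi4 r (iota α c1 c2 h *ᵥ v)) (phi4 r (iota α c1 c2 h *ᵥ w))
        = algebraMap k K (d * Bf v w) + algebraMap k K (d * Tf α v w) * r := by
      rw [phi4_iota hα hr hr0 hrepr, phi4_iota hα hr hr0 hrepr, dK_mulVec, hdet,
        dK_phi4 hα hr hr0]
      simp only [_root_.map_mul]
      ring
    rw [dK_phi4 hα hr hr0] at e1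
    obtain ⟨eB, _⟩ := uniq_repr hindep e1
    rw [Bf_dot, Bf_dot, eB]
  apply eq_of_dot
  intro v w
  rw [← dot_conj, key, Matrix.smul_mulVec, dotProduct_smul, smul_eq_mul]

def s2i (k : Type*) [Field k] : Matrix (Fin 4) (Fin 4) k :=
  !![1, 0, 0, 0; 0, 0, 0, -1; 0, 0, 1, 0; 0, 1, 0, 0]

lemma s2_mul_s2i : s2mat k * s2i k = 1 := by
  ext i j
  fin_cases i <;> fin_cases j <;>
    simp [s2mat, s2i, Matrix.mul_apply, Fin.sum_univ_four, Matrix.vecHead, Matrix.vecTail,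
      Matrix.one_apply]

lemma s2_det_isUnit : IsUnit (s2mat k).det := by
  apply IsUnit.of_mul_eq_one (s2i k).det
  rw [← Matrix.det_mul, s2_mul_s2i, Matrix.det_one]

lemma IsGSp_s2 : IsGSp (s2mat k) := by
  refine ⟨s2_det_isUnit, 1, one_ne_zero, ?_⟩
  rw [one_smul]
  ext i j
  fin_cases i <;> fin_cases j <;>
    simp [s2mat, J4, Matrix.mul_apply, Fin.sum_univ_four, Matrix.vecHead, Matrix.vecTail]

lemma inv_mulVec_cancel {A : Matrix (Fin 4) (Fin 4) k} (hA : IsUnit A.det) (v : Fin 4 → k) :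
    A⁻¹ *ᵥ (A *ᵥ v) = v := by
  rw [Matrix.mulVec_mulVec, Matrix.nonsing_inv_mul _ hA, Matrix.one_mulVec]

lemma mulVec_inv_cancel {A : Matrix (Fin 4) (Fin 4) k} (hA : IsUnit A.det) (v : Fin 4 → k) :
    A *ᵥ (A⁻¹ *ᵥ v) = v := by
  rw [Matrix.mulVec_mulVec, Matrix.mul_nonsing_inv _ hA, Matrix.one_mulVec]

lemma mem_L0 {v : Fin 4 → k} : v ∈ L0 k ↔ v 2 = 0 ∧ v 3 = 0 := by
  rw [L0, Submodule.mem_span_pair]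
  constructor
  · rintro ⟨s, t, rfl⟩
    constructor <;> simp [Matrix.vecHead, Matrix.vecTail]
  · rintro ⟨h2, h3⟩
    refine ⟨v 0, v 1, ?_⟩
    funext i
    fin_cases i <;> simp [Matrix.vecHead, Matrix.vecTail, h2, h3]

lemma pset_iff {p : Matrix (Fin 4) (Fin 4) k} (hp : p ∈ Pset k) (v : Fin 4 → k) :
    p *ᵥ v ∈ L0 k ↔ v ∈ L0 k := by
  obtain ⟨⟨hu, _⟩, hmap⟩ := hp
  constructor
  · intro hv
    rw [← hmap] at hv
    obtain ⟨u, hu', huv⟩ := hv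
    rw [Matrix.mulVecLin_apply] at huv
    have : u = v := by
      have := congrArg (fun w => p⁻¹ *ᵥ w) huv
      simpa [inv_mulVec_cancel hu] using this
    rwa [← this]
  · intro hv
    rw [← hmap]
    exact ⟨v, hv, by rw [Matrix.mulVecLin_apply]⟩

lemma phi4_E1 : phi4 r (![1,0,0,0] : Fin 4 → k) = ![1, 0] := by
  funext i; fin_cases i <;> simp [phi4, Matrix.vecHead, Matrix.vecTail]

lemma phi4_E2 : phi4 r (![0,1,0,0] : Fin 4 → k) = ![r, 0] := by
  funext i; fin_cases i <;> simp [phi4, Matrix.vecHead, Matrix.vecTail]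

lemma phi4_E4 : phi4 r (![0,0,0,1] : Fin 4 → k) = ![0, 1/r] := by
  funext i; fin_cases i <;> simp [phi4, Matrix.vecHead, Matrix.vecTail]

lemma memL0_phi (hr0 : r ≠ 0)
    (hindep : ∀ y1 y2 : k, algebraMap k K y1 + algebraMap k K y2 * r = 0 → y1 = 0 ∧ y2 = 0)
    {v : Fin 4 → k} : v ∈ L0 k ↔ phi4 r v 1 = 0 := by
  rw [mem_L0]
  constructor
  · rintro ⟨h2, h3⟩
    simp [phi4, h2, h3]
  · intro hphi
    simp only [phi4, Matrix.cons_val_one, Matrix.head_cons] at hphi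
    have h' : algebraMap k K (v 3) + algebraMap k K (v 2) * r = 0 := by
      simp only [Matrix.cons_val_zero] at hphi
      field_simp at hphi
      linear_combination hphi
    have := hindep _ _ h'
    exact ⟨this.2, this.1⟩

lemma smul_one_mulVec (u : Fin 2 → K) : (r • (1 : Matrix (Fin 2) (Fin 2) K)) *ᵥ u = r • u := by
  rw [Matrix.smul_mulVec, Matrix.one_mulVec]

lemma R_mem_L0 (hα : α ≠ 0) (hr : r * r = algebraMap k K α) (hr0 : r ≠ 0)
    (hrepr : ∀ x : K, x = algebraMap k K (c1 x) + algebraMap k K (c2 x) * r)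
    (hindep : ∀ y1 y2 : k, algebraMap k K y1 + algebraMap k K y2 * r = 0 → y1 = 0 ∧ y2 = 0)
    {v : Fin 4 → k} (hv : v ∈ L0 k) :
    iota α c1 c2 (r • (1 : Matrix (Fin 2) (Fin 2) K)) *ᵥ v ∈ L0 k := by
  rw [memL0_phi hr0 hindep] at hv ⊢
  rw [phi4_iota hα hr hr0 hrepr, smul_one_mulVec]
  simp [hv]

lemma R_E1 (hα : α ≠ 0) (hr : r * r = algebraMap k K α) (hr0 : r ≠ 0)
    (hrepr : ∀ x : K, x = algebraMap k K (c1 x) + algebraMap k K (c2 x) * r)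
    (hindep : ∀ y1 y2 : k, algebraMap k K y1 + algebraMap k K y2 * r = 0 → y1 = 0 ∧ y2 = 0) :
    iota α c1 c2 (r • (1 : Matrix (Fin 2) (Fin 2) K)) *ᵥ (![1,0,0,0] : Fin 4 → k)
      = ![0,1,0,0] := by
  apply phi4_inj hr0 hindep
  rw [phi4_iota hα hr hr0 hrepr, smul_one_mulVec, phi4_E1, phi4_E2]
  funext i; fin_cases i <;> simp

lemma iota_R_comm (hα : α ≠ 0) (hr : r * r = algebraMap k K α) (hr0 : r ≠ 0)
    (hrepr : ∀ x : K, x = algebraMap k K (c1 x) + algebraMap k K (c2 x) * r)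
    (hindep : ∀ y1 y2 : k, algebraMap k K y1 + algebraMap k K y2 * r = 0 → y1 = 0 ∧ y2 = 0)
    (h : Matrix (Fin 2) (Fin 2) K) (v : Fin 4 → k) :
    iota α c1 c2 h *ᵥ (iota α c1 c2 (r • (1 : Matrix (Fin 2) (Fin 2) K)) *ᵥ v)
      = iota α c1 c2 (r • (1 : Matrix (Fin 2) (Fin 2) K)) *ᵥ (iota α c1 c2 h *ᵥ v) := by
  apply phi4_inj hr0 hindep
  rw [phi4_iota hα hr hr0 hrepr, phi4_iota hα hr hr0 hrepr, phi4_iota hα hr hr0 hrepr,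
    phi4_iota hα hr hr0 hrepr, smul_one_mulVec, smul_one_mulVec, Matrix.mulVec_smul]

lemma s2_E1 : s2mat k *ᵥ (![1,0,0,0] : Fin 4 → k) = ![1,0,0,0] := by
  funext i
  fin_cases i <;> simp [s2mat, Matrix.mulVec, dotProduct, Fin.sum_univ_four,
    Matrix.vecHead, Matrix.vecTail]

lemma s2_E4 : s2mat k *ᵥ (![0,0,0,1] : Fin 4 → k) = ![0,1,0,0] := by
  funext i
  fin_cases i <;> simp [s2mat, Matrix.mulVec, dotProduct, Fin.sum_univ_four,
    Matrix.vecHead, Matrix.vecTail]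

lemma s2_E2 : s2mat k *ᵥ (![0,1,0,0] : Fin 4 → k) = ![0,0,0,-1] := by
  funext i
  fin_cases i <;> simp [s2mat, Matrix.mulVec, dotProduct, Fin.sum_univ_four,
    Matrix.vecHead, Matrix.vecTail]

lemma span_pair_helper {s t : k} (hs : s ≠ 0) :
    Submodule.span k {(![1,0,0,0] : Fin 4 → k),
        s • ((![0,1,0,0] : Fin 4 → k) - t • ![1,0,0,0])} = L0 k := by
  rw [L0]
  apply le_antisymm
  · rw [Submodule.span_le]
    intro x hx
    simp only [Set.mem_insert_iff, Set.mem_singleton_iff] at hx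
    rcases hx with rfl | rfl
    · exact Submodule.subset_span (by simp)
    · refine (Submodule.mem_span_pair).mpr ⟨-(s*t), s, ?_⟩
      module
  · rw [Submodule.span_le]
    intro x hx
    simp only [Set.mem_insert_iff, Set.mem_singleton_iff] at hx
    rcases hx with rfl | rfl
    · exact Submodule.subset_span (by simp)
    · refine (Submodule.mem_span_pair).mpr ⟨t, s⁻¹, ?_⟩
      match_scalars <;> (field_simp; try ring)

lemma phi4_smul (s : k) (v : Fin 4 → k) :
    phi4 r (s • v) = algebraMap k K s • phi4 r v := by
  funext i
  fin_cases i <;>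
    simp [phi4, Matrix.vecHead, Matrix.vecTail, mul_add, _root_.map_mul] <;> ring

lemma phi4_sub (v w : Fin 4 → k) : phi4 r (v - w) = phi4 r v - phi4 r w := by
  funext i
  fin_cases i <;>
    simp [phi4, Matrix.vecHead, Matrix.vecTail, map_sub] <;> ring

end GSpAux

open GSpAux in
/-- `G = P·ι(H) ⊔ P·s₂·ι(H)`: every `g ∈ GSp(4,k)` lies in `P·ι(H)` or in
`P·s₂·ι(H)`, and these two sets are disjoint. -/
theorem statement7
    {k K : Type*} [Field k] [Field K] [Algebra k K]
    (hchar : (2 : k) ≠ 0)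
    (α : k) (hα : α ≠ 0) (hns : ¬ IsSquare α)
    (r : K) (hr : r * r = algebraMap k K α)
    (c1 c2 : K → k)
    (hrepr : ∀ x : K, x = algebraMap k K (c1 x) + algebraMap k K (c2 x) * r)
    (hindep : ∀ y1 y2 : k, algebraMap k K y1 + algebraMap k K y2 * r = 0 →
      y1 = 0 ∧ y2 = 0) :
    (∀ g : Matrix (Fin 4) (Fin 4) k, IsGSp g →
      (∃ p ∈ Pset k, ∃ h : Matrix (Fin 2) (Fin 2) K,
          InH (k := k) h ∧ g = p * iota α c1 c2 h)
      ∨ (∃ p ∈ Pset k, ∃ h : Matrix (Fin 2) (Fin 2) K,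
          InH (k := k) h ∧ g = p * s2mat k * iota α c1 c2 h))
    ∧ ∀ g : Matrix (Fin 4) (Fin 4) k,
        ¬ ((∃ p ∈ Pset k, ∃ h : Matrix (Fin 2) (Fin 2) K,
              InH (k := k) h ∧ g = p * iota α c1 c2 h)
          ∧ (∃ p ∈ Pset k, ∃ h : Matrix (Fin 2) (Fin 2) K,
              InH (k := k) h ∧ g = p * s2mat k * iota α c1 c2 h)) := by
  have hr0 : r ≠ 0 := by
    intro h0
    have hz : algebraMap k K α = 0 := by rw [← hr, h0, mul_zero]
    exact hα (hindep α 0 (by simp [hz])).1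
  constructor
  · -- existence
    intro g hg
    obtain ⟨hgu, lam, hlam, hJg⟩ := hg
    set v1 := g⁻¹ *ᵥ (![1,0,0,0] : Fin 4 → k) with hv1def
    set v2 := g⁻¹ *ᵥ (![0,1,0,0] : Fin 4 → k) with hv2def
    have hgv1 : g *ᵥ v1 = ![1,0,0,0] := mulVec_inv_cancel hgu _
    have hgv2 : g *ᵥ v2 = ![0,1,0,0] := mulVec_inv_cancel hgu _
    -- Lagrangian
    have hB : Bf v1 v2 = 0 := by
      have h1 : (g *ᵥ v1) ⬝ᵥ (J4 k *ᵥ (g *ᵥ v2)) = lam * (v1 ⬝ᵥ (J4 k *ᵥ v2)) := by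
        rw [dot_conj, hJg, Matrix.smul_mulVec, dotProduct_smul, smul_eq_mul]
      rw [hgv1, hgv2, Bf_dot, Bf_dot] at h1
      have h2 : Bf (![1,0,0,0] : Fin 4 → k) ![0,1,0,0] = 0 := by
        simp [Bf, Matrix.vecHead, Matrix.vecTail]
      rw [h2] at h1
      rcases mul_eq_zero.mp h1.symm with h | h
      · exact absurd h hlam
      · exact h
    have hdKUW : dK (phi4 r v1) (phi4 r v2) = algebraMap k K (Tf α v1 v2) * r := by
      rw [dK_phi4 hα hr hr0, hB, map_zero, zero_add]
    have hv1ne : v1 ≠ 0 := by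
      intro h0
      have := congrFun hgv1 0
      rw [h0] at this
      simp [Matrix.mulVec_zero] at this
    have hUne : phi4 r v1 ≠ 0 := by
      intro h0
      exact hv1ne (phi4_inj hr0 hindep (by rw [h0, phi4_zero]))
    by_cases ht : Tf α v1 v2 = 0
    · -- K-line case : left disjunct
      left
      have hUW : phi4 r v1 0 * phi4 r v2 1 - phi4 r v1 1 * phi4 r v2 0 = 0 := by
        have := hdKUW
        rw [ht, map_zero, zero_mul] at this
        exact this
      -- W = c • U
      obtain ⟨c, hW⟩ : ∃ c : K, phi4 r v2 = c • phi4 r v1 := by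
        by_cases hU0 : phi4 r v1 0 = 0
        · have hU1 : phi4 r v1 1 ≠ 0 := by
            intro hU1
            apply hUne
            funext i; fin_cases i
            · exact hU0
            · exact hU1
          refine ⟨phi4 r v2 1 / phi4 r v1 1, ?_⟩
          funext i; fin_cases i
          · show phi4 r v2 0 = _ * phi4 r v1 0
            rw [hU0] at hUW ⊢
            rw [mul_zero]
            have : phi4 r v1 1 * phi4 r v2 0 = 0 := by linear_combination -hUW
            rcases mul_eq_zero.mp this with h | h
            · exact absurd h hU1
            · exact h
          · show phi4 r v2 1 = _ * phi4 r v1 1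
            field_simp
        · refine ⟨phi4 r v2 0 / phi4 r v1 0, ?_⟩
          funext i; fin_cases i
          · show phi4 r v2 0 = _ * phi4 r v1 0
            field_simp
          · show phi4 r v2 1 = _ * phi4 r v1 1
            field_simp
            linear_combination hUW
      have hcrepr : c = algebraMap k K (c1 c) + algebraMap k K (c2 c) * r := hrepr c
      have hγ2 : c2 c ≠ 0 := by
        intro h0
        have hc : c = algebraMap k K (c1 c) := by
          conv_lhs => rw [hcrepr]
          rw [h0, map_zero, zero_mul, add_zero]
        have : phi4 r v2 = phi4 r ((c1 c) • v1) := by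
          rw [phi4_smul, hW, ← hc]
        have hv2v1 : v2 = (c1 c) • v1 := phi4_inj hr0 hindep this
        have : (![0,1,0,0] : Fin 4 → k) = (c1 c) • ![1,0,0,0] := by
          rw [← hgv2, hv2v1, Matrix.mulVec_smul, hgv1]
        have h1 := congrFun this 1
        simp [Matrix.vecHead, Matrix.vecTail] at h1
      set w2 : Fin 4 → k := (c2 c)⁻¹ • (v2 - (c1 c) • v1) with hw2def
      have haγ2 : algebraMap k K (c2 c) ≠ 0 := (map_ne_zero _).mpr hγ2
      have hphiw2 : phi4 r w2 = r • phi4 r v1 := by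
        have hkey : c - algebraMap k K (c1 c) = algebraMap k K (c2 c) * r := by
          nth_rewrite 1 [hcrepr]
          ring
        rw [hw2def, phi4_smul, phi4_sub, phi4_smul, hW, ← sub_smul, hkey, map_inv₀,
          smul_smul, ← mul_assoc, inv_mul_cancel₀ haγ2, one_mul]
      -- construct h with h *ᵥ U = ![1,0]
      obtain ⟨hm, hdeth, hhU⟩ : ∃ hm : Matrix (Fin 2) (Fin 2) K,
          hm.det = 1 ∧ hm *ᵥ phi4 r v1 = ![1, 0] := by
        by_cases hU0 : phi4 r v1 0 = 0
        · have hU1 : phi4 r v1 1 ≠ 0 := by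
            intro hU1
            apply hUne
            funext i; fin_cases i
            · exact hU0
            · exact hU1
          refine ⟨!![0, (phi4 r v1 1)⁻¹; -(phi4 r v1 1), 0], ?_, ?_⟩
          · rw [Matrix.det_fin_two]
            simp
            field_simp
          · funext i; fin_cases i <;>
              simp [Matrix.mulVec, dotProduct, Fin.sum_univ_two, Matrix.vecHead,
                Matrix.vecTail, hU0, inv_mul_cancel₀ hU1]
        · refine ⟨!![(phi4 r v1 0)⁻¹, 0; -(phi4 r v1 1), phi4 r v1 0], ?_, ?_⟩
          · rw [Matrix.det_fin_two]
            simp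
            field_simp
          · funext i; fin_cases i <;>
              simp [Matrix.mulVec, dotProduct, Fin.sum_univ_two, Matrix.vecHead,
                Matrix.vecTail, inv_mul_cancel₀ hU0]
            ring
      have hInH : InH (k := k) hm := ⟨1, one_ne_zero, by rw [hdeth, _root_.map_one]⟩
      have hiv1 : iota α c1 c2 hm *ᵥ v1 = ![1,0,0,0] := by
        apply phi4_inj hr0 hindep
        rw [phi4_iota hα hr hr0 hrepr, hhU, phi4_E1]
      have hiw2 : iota α c1 c2 hm *ᵥ w2 = ![0,1,0,0] := by
        apply phi4_inj hr0 hindep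
        rw [phi4_iota hα hr hr0 hrepr, hphiw2, Matrix.mulVec_smul, hhU, phi4_E2]
        funext i; fin_cases i <;> simp
      have hiU : IsUnit (iota α c1 c2 hm).det := by
        apply iota_det_isUnit hα hr hr0 hrepr hindep
        rw [hdeth]
        exact one_ne_zero
      refine ⟨g * (iota α c1 c2 hm)⁻¹, ⟨?_, ?_⟩, hm, hInH, ?_⟩
      · exact IsGSp_mul ⟨hgu, lam, hlam, hJg⟩ (IsGSp_inv (IsGSp_iota hα hr hr0 hrepr hindep hInH))
      · -- maps L0 to L0
        have hinv1 : (iota α c1 c2 hm)⁻¹ *ᵥ ![1,0,0,0] = v1 := by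
          rw [← hiv1, inv_mulVec_cancel hiU]
        have hinv2 : (iota α c1 c2 hm)⁻¹ *ᵥ ![0,1,0,0] = w2 := by
          rw [← hiw2, inv_mulVec_cancel hiU]
        have him1 : (g * (iota α c1 c2 hm)⁻¹) *ᵥ (![1,0,0,0] : Fin 4 → k) = ![1,0,0,0] := by
          rw [← Matrix.mulVec_mulVec, hinv1, hgv1]
        have him2 : (g * (iota α c1 c2 hm)⁻¹) *ᵥ (![0,1,0,0] : Fin 4 → k)
            = (c2 c)⁻¹ • ((![0,1,0,0] : Fin 4 → k) - (c1 c) • ![1,0,0,0]) := by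
          rw [← Matrix.mulVec_mulVec, hinv2, hw2def, Matrix.mulVec_smul, Matrix.mulVec_sub,
            Matrix.mulVec_smul, hgv1, hgv2]
        conv_lhs => rw [L0]
        rw [Submodule.map_span, Set.image_pair]
        simp only [Matrix.mulVecLin_apply]
        rw [him1, him2]
        exact span_pair_helper (inv_ne_zero hγ2)
      · rw [Matrix.nonsing_inv_mul_cancel_right _ _ hiU]
    · -- non K-line case : right disjunct
      right
      have hat : algebraMap k K (Tf α v1 v2) ≠ 0 := (map_ne_zero _).mpr ht
      have hΔ0 : algebraMap k K (Tf α v1 v2) * r ≠ 0 := mul_ne_zero hat hr0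
      have hUW : phi4 r v1 0 * phi4 r v2 1 - phi4 r v1 1 * phi4 r v2 0
          = algebraMap k K (Tf α v1 v2) * r := hdKUW
      set U := phi4 r v1 with hUdef
      set W := phi4 r v2 with hWdef
      set Δ : K := algebraMap k K (Tf α v1 v2) * r with hΔdef
      set hm : Matrix (Fin 2) (Fin 2) K :=
        !![W 1 / Δ, -(W 0) / Δ; -(U 1) / (Δ * r), U 0 / (Δ * r)] with hmdef
      have hdeth : hm.det = algebraMap k K ((Tf α v1 v2 * α)⁻¹) := by
        have hdet2 : hm.det
            = W 1 / Δ * (U 0 / (Δ * r)) - -W 0 / Δ * (-U 1 / (Δ * r)) := by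
          rw [hmdef, Matrix.det_fin_two]
          rfl
        rw [hdet2, map_inv₀, _root_.map_mul, show algebraMap k K α = r * r from hr.symm, hΔdef]
        field_simp
        linear_combination hUW
      have hdne : (Tf α v1 v2 * α)⁻¹ ≠ 0 := inv_ne_zero (mul_ne_zero ht hα)
      have hInH : InH (k := k) hm := ⟨(Tf α v1 v2 * α)⁻¹, hdne, hdeth⟩
      have hhU : hm *ᵥ U = ![1, 0] := by
        funext i; fin_cases i <;>
          simp only [hmdef, Matrix.mulVec, dotProduct, Fin.sum_univ_two,
            Matrix.cons_val_zero, Matrix.cons_val_one, Matrix.head_cons, Matrix.cons_val',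
            Matrix.empty_val', Matrix.cons_val_fin_one, Matrix.head_fin_const, Fin.isValue,
            Matrix.of_apply]
        · show W 1 / Δ * U 0 + -W 0 / Δ * U 1 = 1
          field_simp
          linear_combination hUW
        · show -U 1 / (Δ * r) * U 0 + U 0 / (Δ * r) * U 1 = 0
          field_simp
          ring
      have hhW : hm *ᵥ W = ![0, 1/r] := by
        funext i; fin_cases i <;>
          simp only [hmdef, Matrix.mulVec, dotProduct, Fin.sum_univ_two,
            Matrix.cons_val_zero, Matrix.cons_val_one, Matrix.head_cons, Matrix.cons_val',
            Matrix.empty_val', Matrix.cons_val_fin_one, Matrix.head_fin_const, Fin.isValue,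
            Matrix.of_apply]
        · show W 1 / Δ * W 0 + -W 0 / Δ * W 1 = 0
          field_simp
          ring
        · show -U 1 / (Δ * r) * W 0 + U 0 / (Δ * r) * W 1 = 1 / r
          field_simp
          linear_combination hUW
      have hiv1 : iota α c1 c2 hm *ᵥ v1 = ![1,0,0,0] := by
        apply phi4_inj hr0 hindep
        rw [phi4_iota hα hr hr0 hrepr, ← hUdef, hhU, phi4_E1]
      have hiv2 : iota α c1 c2 hm *ᵥ v2 = ![0,0,0,1] := by
        apply phi4_inj hr0 hindep
        rw [phi4_iota hα hr hr0 hrepr, ← hWdef, hhW, phi4_E4]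
      have hiU : IsUnit (iota α c1 c2 hm).det := by
        apply iota_det_isUnit hα hr hr0 hrepr hindep
        rw [hdeth]
        exact (map_ne_zero _).mpr hdne
      have hinvs2E1 : (s2mat k)⁻¹ *ᵥ (![1,0,0,0] : Fin 4 → k) = ![1,0,0,0] := by
        have := inv_mulVec_cancel (s2_det_isUnit (k := k)) ![1,0,0,0]
        rwa [s2_E1] at this
      have hinvs2E2 : (s2mat k)⁻¹ *ᵥ (![0,1,0,0] : Fin 4 → k) = ![0,0,0,1] := by
        have := inv_mulVec_cancel (s2_det_isUnit (k := k)) ![0,0,0,1]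
        rwa [s2_E4] at this
      have hinv1 : (iota α c1 c2 hm)⁻¹ *ᵥ ![1,0,0,0] = v1 := by
        rw [← hiv1, inv_mulVec_cancel hiU]
      have hinv2 : (iota α c1 c2 hm)⁻¹ *ᵥ ![0,0,0,1] = v2 := by
        rw [← hiv2, inv_mulVec_cancel hiU]
      refine ⟨g * (iota α c1 c2 hm)⁻¹ * (s2mat k)⁻¹, ⟨?_, ?_⟩, hm, hInH, ?_⟩
      · exact IsGSp_mul
          (IsGSp_mul ⟨hgu, lam, hlam, hJg⟩ (IsGSp_inv (IsGSp_iota hα hr hr0 hrepr hindep hInH)))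
          (IsGSp_inv IsGSp_s2)
      · have him1 : (g * (iota α c1 c2 hm)⁻¹ * (s2mat k)⁻¹) *ᵥ (![1,0,0,0] : Fin 4 → k)
            = ![1,0,0,0] := by
          rw [← Matrix.mulVec_mulVec, hinvs2E1, ← Matrix.mulVec_mulVec, hinv1, hgv1]
        have him2 : (g * (iota α c1 c2 hm)⁻¹ * (s2mat k)⁻¹) *ᵥ (![0,1,0,0] : Fin 4 → k)
            = ![0,1,0,0] := by
          rw [← Matrix.mulVec_mulVec, hinvs2E2, ← Matrix.mulVec_mulVec, hinv2, hgv2]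
        conv_lhs => rw [L0]
        rw [Submodule.map_span, Set.image_pair]
        simp only [Matrix.mulVecLin_apply]
        rw [him1, him2, L0]
      · rw [Matrix.nonsing_inv_mul_cancel_right _ _ (s2_det_isUnit (k := k)),
          Matrix.nonsing_inv_mul_cancel_right _ _ hiU]
  · -- disjointness
    rintro g ⟨⟨p, hp, h1, hh1, hg1⟩, ⟨q, hq, h2, hh2, hg2⟩⟩
    obtain ⟨d2, hd2, hdet2⟩ := hh2
    have hi2U : IsUnit (iota α c1 c2 h2).det := by
      apply iota_det_isUnit hα hr hr0 hrepr hindep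
      rw [hdet2]
      exact (map_ne_zero _).mpr hd2
    set v := (iota α c1 c2 h2)⁻¹ *ᵥ (![1,0,0,0] : Fin 4 → k) with hvdef
    have hi2v : iota α c1 c2 h2 *ᵥ v = ![1,0,0,0] := mulVec_inv_cancel hi2U _
    have hE1L0 : (![1,0,0,0] : Fin 4 → k) ∈ L0 k := by
      rw [mem_L0]
      constructor <;> simp [Matrix.vecHead, Matrix.vecTail]
    have hgv : g *ᵥ v = q *ᵥ ![1,0,0,0] := by
      rw [hg2, ← Matrix.mulVec_mulVec, hi2v, ← Matrix.mulVec_mulVec, s2_E1]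
    have hgvL0 : g *ᵥ v ∈ L0 k := by
      rw [hgv]
      exact (pset_iff hq _).mpr hE1L0
    have hL1 : iota α c1 c2 h1 *ᵥ v ∈ L0 k := by
      have he : g *ᵥ v = p *ᵥ (iota α c1 c2 h1 *ᵥ v) := by
        rw [hg1, ← Matrix.mulVec_mulVec]
      rw [he] at hgvL0
      exact (pset_iff hp _).mp hgvL0
    have hgRv1 : g *ᵥ (iota α c1 c2 (r • (1 : Matrix (Fin 2) (Fin 2) K)) *ᵥ v) ∈ L0 k := by
      rw [hg1, ← Matrix.mulVec_mulVec, iota_R_comm hα hr hr0 hrepr hindep h1 v]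
      exact (pset_iff hp _).mpr (R_mem_L0 hα hr hr0 hrepr hindep hL1)
    have hgRv2 : g *ᵥ (iota α c1 c2 (r • (1 : Matrix (Fin 2) (Fin 2) K)) *ᵥ v)
        = q *ᵥ ![0,0,0,-1] := by
      rw [hg2, ← Matrix.mulVec_mulVec, iota_R_comm hα hr hr0 hrepr hindep h2 v, hi2v,
        R_E1 hα hr hr0 hrepr hindep, ← Matrix.mulVec_mulVec, s2_E2]
    rw [hgRv2] at hgRv1
    have hmem : (![0,0,0,-1] : Fin 4 → k) ∈ L0 k := (pset_iff hq _).mp hgRv1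
    rw [mem_L0] at hmem
    have h3 := hmem.2
    simp [Matrix.vecHead, Matrix.vecTail] at h3
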